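/- arXiv:1107.5646 — 7 statements merged into one kernel-verified Lean document; each statement's English description precedes it below -/
import Mathlib

section
/- Every maximal subgraph is a valid temporal subgraph: if E*_max is an equivalence class of the Δt-connectivity relation on a finite event set E, then E*_max is Δt-connected and for each node all Δt-connected events of that node occurring within E*_max's time span are contained in E*_max (no events can be skipped). -/
/-- An event `(n₁, n₂, t, δ)` connects nodes `n₁ → n₂` during `[t, t+δ]`. -/
structure Event where
  n1 : ℕ
  n2 : ℕ
  t : ℝ
  δ : ℝ

/-- Two events share at least one node. -/
def sharesNode (e f : Event) : Prop :=
  e.n1 = f.n1 ∨ e.n1 = f.n2 ∨ e.n2 = f.n1 ∨ e.n2 = f.n2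

/-- Two events are Δt-adjacent if they share a node and the time gap between
the end of the earlier event and the start of the later one is at most Δt. -/
def adjacent (Δt : ℝ) (e f : Event) : Prop :=
  sharesNode e f ∧ f.t - (e.t + e.δ) ≤ Δt ∧ e.t - (f.t + f.δ) ≤ Δt

/-- Δt-connectivity within a set of events: joined by a sequence of
consecutively Δt-adjacent events, all lying in the set. -/
def connectedIn (Δt : ℝ) (E : Set Event) (e f : Event) : Prop :=
  Relation.ReflTransGen (fun a b => a ∈ E ∧ b ∈ E ∧ adjacent Δt a b) e f

/-- Event `e` involves node `v`. -/
def hasNode (e : Event) (v : ℕ) : Prop :=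
  e.n1 = v ∨ e.n2 = v

attribute [local instance] Classical.propDecidable

lemma adjacent_symm {Δt : ℝ} {a b : Event} (h : adjacent Δt a b) : adjacent Δt b a := by
  obtain ⟨hs, h1, h2⟩ := h
  refine ⟨?_, h2, h1⟩
  unfold sharesNode at *; tauto

lemma connectedIn_symm {Δt : ℝ} {E : Set Event} {a b : Event}
    (h : connectedIn Δt E a b) : connectedIn Δt E b a := by
  refine (@Relation.ReflTransGen.stdSymm Event (fun a b => a ∈ E ∧ b ∈ E ∧ adjacent Δt a b) ⟨?_⟩).symm _ _ h
  intro x y ⟨hx, hy, hadj⟩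
  exact ⟨hy, hx, adjacent_symm hadj⟩



/-- Every maximal subgraph (equivalence class of Δt-connectivity on a finite
event set `E`) is a valid temporal subgraph: it is Δt-connected, and for each
node, any Δt-connected event of that node lying within the class's time span
is contained in the class (no events are skipped). -/
theorem maximal_subgraph_is_valid (Δt : ℝ) (E : Finset Event) (e : Event) (he : e ∈ E)
    (M : Finset Event)
    (hM : M = E.filter (fun f => connectedIn Δt (↑E : Set Event) e f)) :
    (∀ a ∈ M, ∀ b ∈ M, connectedIn Δt (↑M : Set Event) a b) ∧
    (∀ v : ℕ, ∀ a ∈ M, ∀ b ∈ M, ∀ m ∈ E,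
      hasNode a v → hasNode m v → hasNode b v →
      connectedIn Δt (↑E : Set Event) a m →
      a.t < m.t → m.t < b.t → m ∈ M) := by
  subst hM
  have key : ∀ a b : Event, connectedIn Δt (↑E : Set Event) a b →
      a ∈ E.filter (fun f => connectedIn Δt (↑E : Set Event) e f) →
      b ∈ E.filter (fun f => connectedIn Δt (↑E : Set Event) e f) ∧
      connectedIn Δt (↑(E.filter (fun f => connectedIn Δt (↑E : Set Event) e f)) : Set Event) a b := by
    intro a b h ha
    induction h with
    | refl => exact ⟨ha, Relation.ReflTransGen.refl⟩
    | @tail c b hac hcb ih =>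
      obtain ⟨hcM, hacM⟩ := ih
      obtain ⟨hcE, hbE, hadj⟩ := hcb
      have hbM : b ∈ E.filter (fun f => connectedIn Δt (↑E : Set Event) e f) := by
        rw [Finset.mem_filter] at hcM ⊢
        exact ⟨hbE, hcM.2.tail ⟨hcE, hbE, hadj⟩⟩
      exact ⟨hbM, hacM.tail ⟨by simpa using hcM, by simpa using hbM, hadj⟩⟩
  constructor
  · intro a ha b hb
    have hea : connectedIn Δt (↑E : Set Event) e a := (Finset.mem_filter.mp ha).2
    have heb : connectedIn Δt (↑E : Set Event) e b := (Finset.mem_filter.mp hb).2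
    exact (key a b ((connectedIn_symm hea).trans heb) ha).2
  · intro v a ha b hb m hmE _ _ _ ham _ _
    exact (key a m ham ha).1
end

section
/- Let G(E*_max) be the undirected graph whose vertices are the events of a maximal subgraph E*_max, with an edge between two events whenever they are Δt-adjacent and consecutive for one of their shared nodes (i.e., one is the next or previous Δt-adjacent event of the other at some common node). Then every valid temporal subgraph contained in E*_max induces a connected subgraph of G(E*_max): for any valid subgraph E* ⊆ E*_max and any two events in E*, there is a path in G(E*_max) between them using only vertices of E*. -/
open scoped Classical in
private theorem aux_chain (Δt : ℝ) (M : Finset Event)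
    (hconsAdj : ∀ a ∈ M, ∀ b ∈ M, ∀ v : ℕ, hasNode a v → hasNode b v → a.t < b.t →
      (∀ m ∈ M, hasNode m v → ¬((a.t < m.t) ∧ (m.t < b.t))) → adjacent Δt a b)
    (Gedge : Event → Event → Prop)
    (hG : ∀ a b : Event, Gedge a b ↔ (a ∈ M ∧ b ∈ M ∧ adjacent Δt a b ∧
      ∃ v : ℕ, hasNode a v ∧ hasNode b v ∧
        ∀ m ∈ M, hasNode m v → ¬((min a.t b.t < m.t) ∧ (m.t < max a.t b.t))))
    (S : Finset Event) (hSM : S ⊆ M)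
    (hSvalid : ∀ v : ℕ, ∀ a ∈ S, ∀ b ∈ S, hasNode a v → hasNode b v →
      ∀ m ∈ M, hasNode m v → a.t < m.t → m.t < b.t → m ∈ S) :
    ∀ n : ℕ, ∀ v : ℕ, ∀ x, x ∈ S → ∀ y, y ∈ S → hasNode x v → hasNode y v → x.t < y.t →
      (M.filter (fun m => hasNode m v ∧ x.t < m.t ∧ m.t < y.t)).card ≤ n →
      Relation.ReflTransGen (fun a b => a ∈ S ∧ b ∈ S ∧ Gedge a b) x y := by
  intro n
  induction n with
  | zero =>
    intro v x hx y hy hxv hyv hxy hcard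
    have hempty : M.filter (fun m => hasNode m v ∧ x.t < m.t ∧ m.t < y.t) = ∅ :=
      Finset.card_eq_zero.mp (Nat.le_zero.mp hcard)
    have hnob : ∀ m ∈ M, hasNode m v → ¬((x.t < m.t) ∧ (m.t < y.t)) := by
      intro m hm hmv hbet
      have : m ∈ M.filter (fun m => hasNode m v ∧ x.t < m.t ∧ m.t < y.t) :=
        Finset.mem_filter.mpr ⟨hm, hmv, hbet.1, hbet.2⟩
      simp [hempty] at this
    have hadj : adjacent Δt x y := hconsAdj x (hSM hx) y (hSM hy) v hxv hyv hxy hnob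
    refine Relation.ReflTransGen.single ⟨hx, hy, (hG x y).mpr ⟨hSM hx, hSM hy, hadj, v, hxv, hyv, ?_⟩⟩
    intro m hm hmv
    rw [min_eq_left hxy.le, max_eq_right hxy.le]
    exact hnob m hm hmv
  | succ n ih =>
    intro v x hx y hy hxv hyv hxy hcard
    set B := M.filter (fun m => hasNode m v ∧ x.t < m.t ∧ m.t < y.t) with hB
    by_cases hBe : B = ∅
    · have hnob : ∀ m ∈ M, hasNode m v → ¬((x.t < m.t) ∧ (m.t < y.t)) := by
        intro m hm hmv hbet
        have : m ∈ B := Finset.mem_filter.mpr ⟨hm, hmv, hbet.1, hbet.2⟩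
        simp [hBe] at this
      have hadj : adjacent Δt x y := hconsAdj x (hSM hx) y (hSM hy) v hxv hyv hxy hnob
      refine Relation.ReflTransGen.single ⟨hx, hy, (hG x y).mpr ⟨hSM hx, hSM hy, hadj, v, hxv, hyv, ?_⟩⟩
      intro m hm hmv
      rw [min_eq_left hxy.le, max_eq_right hxy.le]
      exact hnob m hm hmv
    · have hBne : B.Nonempty := Finset.nonempty_of_ne_empty hBe
      obtain ⟨m, hmB, hmin⟩ := B.exists_min_image Event.t hBne
      have hmprops := Finset.mem_filter.mp hmB
      obtain ⟨hmM, hmv, hxm, hmy⟩ := hmprops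
      have hmS : m ∈ S := hSvalid v x hx y hy hxv hyv m hmM hmv hxm hmy
      -- no event strictly between x and m
      have hnob : ∀ m' ∈ M, hasNode m' v → ¬((x.t < m'.t) ∧ (m'.t < m.t)) := by
        intro m' hm' hm'v hbet
        have hm'B : m' ∈ B := Finset.mem_filter.mpr ⟨hm', hm'v, hbet.1, hbet.2.trans hmy⟩
        exact absurd (hmin m' hm'B) (not_le.mpr hbet.2)
      have hadj : adjacent Δt x m := hconsAdj x (hSM hx) m hmM v hxv hmv hxm hnob
      have hstep : Gedge x m := by
        refine (hG x m).mpr ⟨hSM hx, hmM, hadj, v, hxv, hmv, ?_⟩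
        intro m' hm' hm'v
        rw [min_eq_left hxm.le, max_eq_right hxm.le]
        exact hnob m' hm' hm'v
      -- tail: from m to y
      have hsub : M.filter (fun m' => hasNode m' v ∧ m.t < m'.t ∧ m'.t < y.t) ⊆ B.erase m := by
        intro m' hm'
        have hp := Finset.mem_filter.mp hm'
        refine Finset.mem_erase.mpr ⟨?_, Finset.mem_filter.mpr ⟨hp.1, hp.2.1, hxm.trans hp.2.2.1, hp.2.2.2⟩⟩
        intro h; subst h; exact lt_irrefl _ hp.2.2.1
      have hcard' : (M.filter (fun m' => hasNode m' v ∧ m.t < m'.t ∧ m'.t < y.t)).card ≤ n := by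
        have := Finset.card_le_card hsub
        have h2 := Finset.card_erase_of_mem hmB
        omega
      exact Relation.ReflTransGen.head ⟨hx, hmS, hstep⟩ (ih v m hmS y hy hmv hyv hmy hcard')

open scoped Classical in
private theorem bridge (Δt : ℝ) (M : Finset Event)
    (hdistinct : ∀ a ∈ M, ∀ b ∈ M, ∀ v : ℕ,
      hasNode a v → hasNode b v → a ≠ b → a.t ≠ b.t)
    (hconsAdj : ∀ a ∈ M, ∀ b ∈ M, ∀ v : ℕ, hasNode a v → hasNode b v → a.t < b.t →
      (∀ m ∈ M, hasNode m v → ¬((a.t < m.t) ∧ (m.t < b.t))) → adjacent Δt a b)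
    (Gedge : Event → Event → Prop)
    (hG : ∀ a b : Event, Gedge a b ↔ (a ∈ M ∧ b ∈ M ∧ adjacent Δt a b ∧
      ∃ v : ℕ, hasNode a v ∧ hasNode b v ∧
        ∀ m ∈ M, hasNode m v → ¬((min a.t b.t < m.t) ∧ (m.t < max a.t b.t))))
    (S : Finset Event) (hSM : S ⊆ M)
    (hSvalid : ∀ v : ℕ, ∀ a ∈ S, ∀ b ∈ S, hasNode a v → hasNode b v →
      ∀ m ∈ M, hasNode m v → a.t < m.t → m.t < b.t → m ∈ S)
    (x : Event) (hx : x ∈ S) (y : Event) (hy : y ∈ S) (hsh : sharesNode x y) :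
    Relation.ReflTransGen (fun a b => a ∈ S ∧ b ∈ S ∧ Gedge a b) x y := by
  obtain ⟨v, hxv, hyv⟩ : ∃ v, hasNode x v ∧ hasNode y v := by
    rcases hsh with h | h | h | h
    · exact ⟨x.n1, Or.inl rfl, Or.inl h.symm⟩
    · exact ⟨x.n1, Or.inl rfl, Or.inr h.symm⟩
    · exact ⟨x.n2, Or.inr rfl, Or.inl h.symm⟩
    · exact ⟨x.n2, Or.inr rfl, Or.inr h.symm⟩
  by_cases hxy : x = y
  · subst hxy; exact Relation.ReflTransGen.refl
  · have hne : x.t ≠ y.t := hdistinct x (hSM hx) y (hSM hy) v hxv hyv hxy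
    have hsymm : Symmetric (fun a b => a ∈ S ∧ b ∈ S ∧ Gedge a b) := by
      intro a b ⟨ha, hb, hab⟩
      refine ⟨hb, ha, ?_⟩
      obtain ⟨haM, hbM, ⟨hsh', h1, h2⟩, w, hav, hbv, hnob⟩ := (hG a b).mp hab
      refine (hG b a).mpr ⟨hbM, haM, ⟨?_, h2, h1⟩, w, hbv, hav, ?_⟩
      · unfold sharesNode at hsh' ⊢; tauto
      · intro m hm hmv
        rw [min_comm, max_comm]
        exact hnob m hm hmv
    rcases lt_or_gt_of_ne hne with h | h
    · exact aux_chain Δt M hconsAdj Gedge hG S hSM hSvalid _ v x hx y hy hxv hyv h le_rfl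
    · exact (@Relation.ReflTransGen.symmetric _ _ ⟨hsymm⟩).symm _ _
        (aux_chain Δt M hconsAdj Gedge hG S hSM hSvalid _ v y hy x hx hyv hxv h le_rfl)

/-- Every valid temporal subgraph `S` of a maximal subgraph `M` induces a
connected subgraph of the event graph `G(M)` (whose vertices are the events of
`M`, with an edge between Δt-adjacent events that are consecutive at a common
node): any two events of `S` are joined by a path of `G(M)`-edges lying in `S`. -/
theorem valid_subgraph_connected_in_event_graph (Δt : ℝ) (M : Finset Event)
    -- all pairs of events of the maximal subgraph are Δt-connected within it
    (hMconn : ∀ a ∈ M, ∀ b ∈ M, connectedIn Δt (↑M : Set Event) a b)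
    -- a node is involved in at most one event at a time
    (hdistinct : ∀ a ∈ M, ∀ b ∈ M, ∀ v : ℕ,
      hasNode a v → hasNode b v → a ≠ b → a.t ≠ b.t)
    -- consecutive events at a node within `M` are Δt-adjacent
    (hconsAdj : ∀ a ∈ M, ∀ b ∈ M, ∀ v : ℕ, hasNode a v → hasNode b v → a.t < b.t →
      (∀ m ∈ M, hasNode m v → ¬((a.t < m.t) ∧ (m.t < b.t))) → adjacent Δt a b)
    -- the edges of the graph G(M)
    (Gedge : Event → Event → Prop)
    (hG : ∀ a b : Event, Gedge a b ↔ (a ∈ M ∧ b ∈ M ∧ adjacent Δt a b ∧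
      ∃ v : ℕ, hasNode a v ∧ hasNode b v ∧
        ∀ m ∈ M, hasNode m v → ¬((min a.t b.t < m.t) ∧ (m.t < max a.t b.t))))
    -- S is a valid temporal subgraph contained in M
    (S : Finset Event) (hSM : S ⊆ M)
    (hSconn : ∀ a ∈ S, ∀ b ∈ S, connectedIn Δt (↑S : Set Event) a b)
    (hSvalid : ∀ v : ℕ, ∀ a ∈ S, ∀ b ∈ S, hasNode a v → hasNode b v →
      ∀ m ∈ M, hasNode m v → a.t < m.t → m.t < b.t → m ∈ S) :
    ∀ a ∈ S, ∀ b ∈ S,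
      Relation.ReflTransGen (fun x y => x ∈ S ∧ y ∈ S ∧ Gedge x y) a b := by
  intro a ha b hb
  have h := hSconn a ha b hb
  induction h with
  | refl => exact Relation.ReflTransGen.refl
  | tail _ hstep ih =>
    obtain ⟨hc, hd, hadj⟩ := hstep
    exact (ih hc).trans (bridge Δt M hdistinct hconsAdj Gedge hG S hSM hSvalid _ hc _ hd hadj.1)
end

section
/- The converse of the previous statement fails in general: there exists a maximal subgraph E*_max (a concrete event set may be constructed, e.g., three events e_1, e_2, e_3 all involving a common node c with e_2 between e_1 and e_3 in time, all pairwise Δt-adjacent, where e_1 and e_3 also share a second node) and a connected subgraph of G(E*_max) (namely {e_1, e_3}) whose event set is not a valid temporal subgraph. -/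
/-- The converse of the previous statement fails: there is a maximal subgraph
`M = {e₁, e₂, e₃}` (all events at a common node `c`, `e₂` between `e₁` and `e₃`
in time, all pairwise Δt-adjacent, with `e₁` and `e₃` also sharing a second
node `v ≠ c`) such that `{e₁, e₃}` spans a connected subgraph of `G(M)` (indeed
`e₁ e₃` is an edge of `G(M)`) but is not a valid temporal subgraph (omitting
`e₂` violates consecutiveness at node `c`). -/
theorem event_graph_converse_fails :
    ∃ (Δt : ℝ) (e1 e2 e3 : Event) (c : ℕ),
      e1 ≠ e2 ∧ e2 ≠ e3 ∧ e1 ≠ e3 ∧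
      hasNode e1 c ∧ hasNode e2 c ∧ hasNode e3 c ∧
      e1.t < e2.t ∧ e2.t < e3.t ∧
      adjacent Δt e1 e2 ∧ adjacent Δt e2 e3 ∧ adjacent Δt e1 e3 ∧
      (∃ v : ℕ, v ≠ c ∧ hasNode e1 v ∧ hasNode e3 v ∧ ¬ hasNode e2 v) ∧
      -- `e₁ e₃` is an edge of G(M): Δt-adjacent and consecutive at a shared node
      (∃ v : ℕ, hasNode e1 v ∧ hasNode e3 v ∧
        ∀ m ∈ ({e1, e2, e3} : Set Event), hasNode m v →
          ¬((min e1.t e3.t < m.t) ∧ (m.t < max e1.t e3.t))) ∧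
      -- but `{e₁, e₃}` is not a valid temporal subgraph within M
      ¬(∀ v : ℕ, ∀ a ∈ ({e1, e3} : Set Event), ∀ b ∈ ({e1, e3} : Set Event),
          hasNode a v → hasNode b v →
          ∀ m ∈ ({e1, e2, e3} : Set Event), hasNode m v →
          a.t < m.t → m.t < b.t → m ∈ ({e1, e3} : Set Event)) := by
  refine ⟨10, ⟨0,1,0,0⟩, ⟨0,2,1,0⟩, ⟨0,1,2,0⟩, 0, ?_, ?_, ?_, ?_, ?_, ?_, ?_, ?_, ?_, ?_, ?_, ?_, ?_, ?_⟩
  · simp [Event.mk.injEq]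
  · simp [Event.mk.injEq]
  · intro h; exact absurd (congrArg Event.t h) (by norm_num)
  · left; rfl
  · left; rfl
  · left; rfl
  · norm_num
  · norm_num
  · exact ⟨Or.inl rfl, by norm_num, by norm_num⟩
  · exact ⟨Or.inl rfl, by norm_num, by norm_num⟩
  · exact ⟨Or.inl rfl, by norm_num, by norm_num⟩
  · exact ⟨1, by norm_num, Or.inr rfl, Or.inr rfl, by simp [hasNode]⟩
  · refine ⟨1, Or.inr rfl, Or.inr rfl, ?_⟩
    intro m hm hmv
    rcases hm with h | h | h
    · subst h; simp
    · subst h; rcases hmv with h | h <;> simp at h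
    · subst h; simp
  · intro H
    have := H 0 ⟨0,1,0,0⟩ (Or.inl rfl) ⟨0,1,2,0⟩ (Or.inr rfl) (Or.inl rfl) (Or.inl rfl)
      ⟨0,2,1,0⟩ (Or.inr (Or.inl rfl)) (Or.inl rfl) (by norm_num) (by norm_num)
    rcases this with h | h
    · exact absurd (congrArg Event.n2 h) (by norm_num)
    · exact absurd (congrArg Event.n2 h) (by norm_num)
end

section
/- The algorithm FindConnectedSets enumerates every connected vertex set of a finite undirected graph exactly once: for each vertex i, the search tree rooted at i (which excludes all vertices smaller than i and extends sets only through allowed frontier vertices, excluding at each extension step all frontier vertices smaller than the chosen one) generates precisely the connected vertex sets whose minimum element is i, and generates each such set exactly once. -/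
/-- A state of `FindConnectedSets`: the current set `S`, the excluded set `V⁻`,
and the frontier `V⁺`. -/
abbrev FCSState (n : ℕ) := Finset (Fin n) × Finset (Fin n) × Finset (Fin n)

/-- The root state of the search tree rooted at `i`:
`S = {i}`, `V⁻ = {j : j ≤ i}`, `V⁺ = {j ∈ N(i) : j > i}`. -/
def rootState {n : ℕ} (G : SimpleGraph (Fin n)) [DecidableRel G.Adj] (i : Fin n) :
    FCSState n :=
  ({i}, Finset.univ.filter (fun j => j ≤ i),
    Finset.univ.filter (fun j => G.Adj i j ∧ i < j))

/-- Extending a state with a frontier vertex `i`: the current set becomes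
`S ∪ {i}`, the excluded set `V⁻ ∪ {j ∈ V⁺ : j ≤ i}`, and the frontier
`{j ∈ V⁺ : j > i} ∪ {j ∈ N(i) : j not excluded}`. -/
def stepState {n : ℕ} (G : SimpleGraph (Fin n)) [DecidableRel G.Adj]
    (σ : FCSState n) (i : Fin n) : FCSState n :=
  (insert i σ.1,
   σ.2.1 ∪ σ.2.2.filter (fun j => j ≤ i),
   σ.2.2.filter (fun j => i < j) ∪
     Finset.univ.filter (fun j =>
       G.Adj i j ∧ j ∉ σ.2.1 ∪ σ.2.2.filter (fun j' => j' ≤ i)))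

/-- `ReachL G σ l τ`: starting from state `σ` and successively extending with
the frontier vertices listed in `l`, the recursion reaches state `τ`. -/
inductive ReachL {n : ℕ} (G : SimpleGraph (Fin n)) [DecidableRel G.Adj] :
    FCSState n → List (Fin n) → FCSState n → Prop
  | refl (σ : FCSState n) : ReachL G σ [] σ
  | cons {σ : FCSState n} {i : Fin n} {l : List (Fin n)} {τ : FCSState n} :
      i ∈ σ.2.2 → ReachL G (stepState G σ i) l τ → ReachL G σ (i :: l) τ

/-- A connected vertex set: nonempty, and any two of its vertices are joined
by a path within the set. -/
def connSet {n : ℕ} (G : SimpleGraph (Fin n)) (S : Finset (Fin n)) : Prop :=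
  S.Nonempty ∧ ∀ a ∈ S, ∀ b ∈ S,
    Relation.ReflTransGen (fun x y => x ∈ S ∧ y ∈ S ∧ G.Adj x y) a b

section Aux

variable {n : ℕ} (G : SimpleGraph (Fin n)) [DecidableRel G.Adj]

/-- The full invariant of the search maintained along the recursion. -/
def InvF (i : Fin n) (σ : FCSState n) : Prop :=
  i ∈ σ.1 ∧ σ.1 ⊆ σ.2.1 ∧ Disjoint σ.2.1 σ.2.2 ∧
  (∀ j : Fin n, j ≤ i → j ∈ σ.2.1) ∧
  (∀ j ∈ σ.2.2, ∃ a ∈ σ.1, G.Adj a j) ∧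
  (∀ j : Fin n, (∃ a ∈ σ.1, G.Adj a j) → j ∉ σ.2.1 → j ∈ σ.2.2) ∧
  connSet G σ.1 ∧ (∀ j ∈ σ.1, i ≤ j)

omit [DecidableRel G.Adj] in
lemma connSet_insert {S : Finset (Fin n)} {a v : Fin n}
    (h : connSet G S) (ha : a ∈ S) (hav : G.Adj a v) :
    connSet G (insert v S) := by
  obtain ⟨hne, hconn⟩ := h
  refine ⟨⟨v, Finset.mem_insert_self _ _⟩, ?_⟩
  have mono : ∀ x y, Relation.ReflTransGen (fun x y => x ∈ S ∧ y ∈ S ∧ G.Adj x y) x y →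
      Relation.ReflTransGen (fun x y => x ∈ insert v S ∧ y ∈ insert v S ∧ G.Adj x y) x y :=
    fun x y h => Relation.ReflTransGen.mono (fun p q hpq =>
      ⟨Finset.mem_insert_of_mem hpq.1, Finset.mem_insert_of_mem hpq.2.1, hpq.2.2⟩) x y h
  have hva : Relation.ReflTransGen (fun x y => x ∈ insert v S ∧ y ∈ insert v S ∧ G.Adj x y) v a :=
    Relation.ReflTransGen.single ⟨Finset.mem_insert_self _ _, Finset.mem_insert_of_mem ha, hav.symm⟩
  have hav' : Relation.ReflTransGen (fun x y => x ∈ insert v S ∧ y ∈ insert v S ∧ G.Adj x y) a v :=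
    Relation.ReflTransGen.single ⟨Finset.mem_insert_of_mem ha, Finset.mem_insert_self _ _, hav⟩
  intro x hx y hy
  rcases Finset.mem_insert.1 hx with h1 | h1 <;> rcases Finset.mem_insert.1 hy with h2 | h2
  · rw [h1, h2]
  · rw [h1]; exact hva.trans (mono _ _ (hconn a ha y h2))
  · rw [h2]; exact (mono _ _ (hconn x h1 a ha)).trans hav'
  · exact mono _ _ (hconn x h1 y h2)

lemma invF_root (i : Fin n) : InvF G i (rootState G i) := by
  refine ⟨?_, ?_, ?_, ?_, ?_, ?_, ?_, ?_⟩
  · simp [rootState]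
  · intro x hx
    simp only [rootState, Finset.mem_singleton] at hx
    simp only [rootState, Finset.mem_filter, Finset.mem_univ, true_and]
    exact hx ▸ le_refl i
  · rw [Finset.disjoint_left]
    intro x hx hx'
    simp only [rootState, Finset.mem_filter, Finset.mem_univ, true_and] at hx hx'
    exact absurd hx (not_le.2 hx'.2)
  · intro j hj
    simp only [rootState, Finset.mem_filter, Finset.mem_univ, true_and]
    exact hj
  · intro j hj
    simp only [rootState, Finset.mem_filter, Finset.mem_univ, true_and] at hj
    exact ⟨i, by simp [rootState], hj.1⟩
  · rintro j ⟨a, ha, hadj⟩ hj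
    simp only [rootState, Finset.mem_singleton] at ha
    simp only [rootState, Finset.mem_filter, Finset.mem_univ, true_and] at hj ⊢
    subst ha
    exact ⟨hadj, lt_of_not_ge hj⟩
  · refine ⟨⟨i, by simp [rootState]⟩, ?_⟩
    intro a ha b hb
    simp only [rootState, Finset.mem_singleton] at ha hb
    rw [ha, hb]
  · intro j hj
    simp only [rootState, Finset.mem_singleton] at hj
    exact hj ▸ le_refl i

lemma invF_step {i k : Fin n} {σ : FCSState n} (h : InvF G i σ) (hk : k ∈ σ.2.2) :
    InvF G i (stepState G σ k) := by
  obtain ⟨h1, h2, h3, h4, h5, h6, h7, h8⟩ := h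
  have hkV : k ∉ σ.2.1 := fun hc => Finset.disjoint_left.1 h3 hc hk
  have hkS : k ∉ σ.1 := fun hc => hkV (h2 hc)
  have hik : i < k := lt_of_not_ge fun hle => hkV (h4 k hle)
  refine ⟨?_, ?_, ?_, ?_, ?_, ?_, ?_, ?_⟩
  · exact Finset.mem_insert_of_mem h1
  · intro x hx
    rcases Finset.mem_insert.1 hx with rfl | hx
    · exact Finset.mem_union_right _ (Finset.mem_filter.2 ⟨hk, le_refl x⟩)
    · exact Finset.mem_union_left _ (h2 hx)
  · rw [Finset.disjoint_left]
    intro x hx hx'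
    simp only [stepState, Finset.mem_union, Finset.mem_filter, Finset.mem_univ, true_and] at hx hx'
    rcases hx' with ⟨hx2, hlt⟩ | ⟨_, hnot⟩
    · rcases hx with hx1 | ⟨_, hle⟩
      · exact Finset.disjoint_left.1 h3 hx1 hx2
      · exact absurd hle (not_le.2 hlt)
    · exact hnot hx
  · intro j hj
    exact Finset.mem_union_left _ (h4 j hj)
  · intro j hj
    simp only [stepState, Finset.mem_union, Finset.mem_filter, Finset.mem_univ, true_and] at hj
    rcases hj with ⟨hj2, _⟩ | ⟨hadj, _⟩
    · obtain ⟨a, ha, hadj⟩ := h5 j hj2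
      exact ⟨a, Finset.mem_insert_of_mem ha, hadj⟩
    · exact ⟨k, Finset.mem_insert_self _ _, hadj⟩
  · rintro j ⟨a, ha, hadj⟩ hjV
    have hjV' : j ∉ σ.2.1 ∪ σ.2.2.filter (fun j' => j' ≤ k) := hjV
    simp only [Finset.mem_union, Finset.mem_filter] at hjV'
    push_neg at hjV'
    simp only [stepState, Finset.mem_union, Finset.mem_filter, Finset.mem_univ, true_and]
    rcases Finset.mem_insert.1 ha with hak | ha
    · right
      refine ⟨hak ▸ hadj, ?_⟩
      push_neg
      exact hjV'
    · left
      have hjV1 : j ∉ σ.2.1 := hjV'.1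
      have hj2 : j ∈ σ.2.2 := h6 j ⟨a, ha, hadj⟩ hjV1
      exact ⟨hj2, hjV'.2 hj2⟩
  · obtain ⟨a, ha, hadj⟩ := h5 k hk
    exact connSet_insert G h7 ha hadj
  · intro j hj
    rcases Finset.mem_insert.1 hj with rfl | hj
    · exact le_of_lt hik
    · exact h8 j hj

lemma reach_props {i : Fin n} {σ τ : FCSState n} {l : List (Fin n)}
    (hr : ReachL G σ l τ) :
    InvF G i σ →
    InvF G i τ ∧ σ.1 ⊆ τ.1 ∧ σ.2.1 ⊆ τ.2.1 ∧
      (∀ x ∈ σ.2.1, x ∉ σ.1 → x ∉ τ.1) := by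
  induction hr with
  | refl σ => exact fun h => ⟨h, subset_rfl, subset_rfl, fun x _ hx => hx⟩
  | @cons σ k l τ hk hrest ih =>
    intro h
    obtain ⟨hI, hsub1, hsub2, hkeep⟩ := ih (invF_step G h hk)
    refine ⟨hI, ?_, ?_, ?_⟩
    · exact (Finset.subset_insert k σ.1).trans hsub1
    · exact Finset.Subset.trans Finset.subset_union_left hsub2
    · intro x hx hx1
      apply hkeep
      · exact Finset.mem_union_left _ hx
      · intro hc
        rcases Finset.mem_insert.1 hc with h' | h'
        · exact Finset.disjoint_left.1 h.2.2.1 (h' ▸ hx) hk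
        · exact hx1 h'

omit [DecidableRel G.Adj] in
lemma exists_boundary {S T : Finset (Fin n)} (hS : connSet G S) {a b : Fin n}
    (haS : a ∈ S) (haT : a ∈ T) (hbS : b ∈ S) (hbT : b ∉ T) :
    ∃ j ∈ S, j ∉ T ∧ ∃ c ∈ T, G.Adj c j := by
  have key : ∀ x, Relation.ReflTransGen (fun x y => x ∈ S ∧ y ∈ S ∧ G.Adj x y) a x →
      x ∈ T ∨ ∃ j ∈ S, j ∉ T ∧ ∃ c ∈ T, G.Adj c j := by
    intro x hx
    induction hx with
    | refl => exact Or.inl haT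
    | @tail p q hap hpq ih =>
      rcases ih with hpT | hres
      · by_cases hqT : q ∈ T
        · exact Or.inl hqT
        · exact Or.inr ⟨q, hpq.2.1, hqT, p, hpT, hpq.2.2⟩
      · exact Or.inr hres
  rcases key b (hS.2 a haS b hbS) with h | h
  · exact (hbT h).elim
  · exact h

lemma complete (i : Fin n) {S : Finset (Fin n)} (hS : connSet G S) :
    ∀ N (σ : FCSState n), (S \ σ.1).card = N → InvF G i σ → σ.1 ⊆ S →
      (∀ j ∈ S, j ∈ σ.2.1 → j ∈ σ.1) →
      ∃ l τ, ReachL G σ l τ ∧ τ.1 = S := by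
  intro N
  induction N with
  | zero =>
    intro σ h0 _ hsub _
    have he : S \ σ.1 = ∅ := Finset.card_eq_zero.1 h0
    have hSeq : S = σ.1 := by
      apply Finset.Subset.antisymm _ hsub
      intro x hx
      by_contra hx1
      have : x ∈ S \ σ.1 := Finset.mem_sdiff.2 ⟨hx, hx1⟩
      simp [he] at this
    exact ⟨[], σ, ReachL.refl σ, hSeq.symm⟩
  | succ N ih =>
    intro σ hcard hI hsub hV
    have h1 := hI.1
    have h2 := hI.2.1
    have h3 := hI.2.2.1
    have h6 := hI.2.2.2.2.2.1
    have hne : (S \ σ.1).Nonempty := by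
      rw [← Finset.card_pos, hcard]; exact Nat.succ_pos N
    obtain ⟨b, hb⟩ := hne
    obtain ⟨hbS, hbσ⟩ := Finset.mem_sdiff.1 hb
    obtain ⟨j, hjS, hjσ, c, hcσ, hadj⟩ := exists_boundary G hS (hsub h1) h1 hbS hbσ
    have hjV : j ∉ σ.2.1 := fun hc => hjσ (hV j hjS hc)
    have hj2 : j ∈ σ.2.2 := h6 j ⟨c, hcσ, hadj⟩ hjV
    have hFne : (σ.2.2 ∩ S).Nonempty := ⟨j, Finset.mem_inter.2 ⟨hj2, hjS⟩⟩
    set m := (σ.2.2 ∩ S).min' hFne with hm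
    have hmmem := (σ.2.2 ∩ S).min'_mem hFne
    have hm2 : m ∈ σ.2.2 := (Finset.mem_inter.1 hmmem).1
    have hmS : m ∈ S := (Finset.mem_inter.1 hmmem).2
    have hmσ : m ∉ σ.1 := fun hc => Finset.disjoint_left.1 h3 (h2 hc) hm2
    have hmem : m ∈ S \ σ.1 := Finset.mem_sdiff.2 ⟨hmS, hmσ⟩
    have hcard' : (S \ (stepState G σ m).1).card = N := by
      have hsd : S \ insert m σ.1 = (S \ σ.1).erase m := by
        ext x
        simp only [Finset.mem_sdiff, Finset.mem_insert, Finset.mem_erase]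
        tauto
      show (S \ insert m σ.1).card = N
      rw [hsd, Finset.card_erase_of_mem hmem, hcard]
      rfl
    have hsub' : (stepState G σ m).1 ⊆ S := by
      intro x hx
      rcases Finset.mem_insert.1 hx with h' | h'
      · exact h' ▸ hmS
      · exact hsub h'
    have hV' : ∀ j' ∈ S, j' ∈ (stepState G σ m).2.1 → j' ∈ (stepState G σ m).1 := by
      intro j' hj'S hj'
      rcases Finset.mem_union.1 hj' with h' | h'
      · exact Finset.mem_insert_of_mem (hV j' hj'S h')
      · obtain ⟨hj'2, hle⟩ := Finset.mem_filter.1 h'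
        have : m ≤ j' := Finset.min'_le _ _ (Finset.mem_inter.2 ⟨hj'2, hj'S⟩)
        have : j' = m := le_antisymm hle this
        exact this ▸ Finset.mem_insert_self m σ.1
    obtain ⟨l, τ, hr, hτ⟩ := ih (stepState G σ m) hcard' (invF_step G hI hm2) hsub' hV'
    exact ⟨m :: l, τ, ReachL.cons hm2 hr, hτ⟩

lemma unique_list {i : Fin n} :
    ∀ (l : List (Fin n)) (σ : FCSState n), InvF G i σ →
      ∀ (l' : List (Fin n)) (τ τ' : FCSState n),
      ReachL G σ l τ → ReachL G σ l' τ' → τ.1 = τ'.1 → l = l' := by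
  intro l
  induction l with
  | nil =>
    intro σ hI l' τ τ' hr hr' heq
    cases hr
    cases hr' with
    | refl => rfl
    | @cons _ k l₂ _ hk hrest =>
      exfalso
      have hsub := (reach_props G hrest (invF_step G hI hk)).2.1
      have hkτ' : k ∈ τ'.1 := hsub (Finset.mem_insert_self k σ.1)
      have hkσ : k ∉ σ.1 := fun hc => Finset.disjoint_left.1 hI.2.2.1 (hI.2.1 hc) hk
      exact hkσ (heq ▸ hkτ')
  | cons a l₁ ih =>
    intro σ hI l' τ τ' hr hr' heq
    cases hr with
    | cons ha hrest =>
      cases hr' with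
      | refl =>
        exfalso
        have hsub := (reach_props G hrest (invF_step G hI ha)).2.1
        have haτ : a ∈ τ.1 := hsub (Finset.mem_insert_self a σ.1)
        have haσ : a ∉ σ.1 := fun hc => Finset.disjoint_left.1 hI.2.2.1 (hI.2.1 hc) ha
        exact haσ (heq ▸ haτ)
      | @cons _ a' l₂ _ ha' hrest' =>
        have haa : a = a' := by
          rcases lt_trichotomy a a' with hlt | heq' | hgt
          · exfalso
            have haτ : a ∈ τ.1 :=
              (reach_props G hrest (invF_step G hI ha)).2.1 (Finset.mem_insert_self a σ.1)
            have hkeep := (reach_props G hrest' (invF_step G hI ha')).2.2.2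
            have haσ : a ∉ σ.1 := fun hc => Finset.disjoint_left.1 hI.2.2.1 (hI.2.1 hc) ha
            have h1 : a ∈ (stepState G σ a').2.1 :=
              Finset.mem_union_right _ (Finset.mem_filter.2 ⟨ha, le_of_lt hlt⟩)
            have h2 : a ∉ (stepState G σ a').1 := by
              intro hc
              rcases Finset.mem_insert.1 hc with h' | h'
              · exact absurd h' (ne_of_lt hlt)
              · exact haσ h'
            exact hkeep a h1 h2 (heq ▸ haτ)
          · exact heq'
          · exfalso
            have haτ' : a' ∈ τ'.1 :=
              (reach_props G hrest' (invF_step G hI ha')).2.1 (Finset.mem_insert_self a' σ.1)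
            have hkeep := (reach_props G hrest (invF_step G hI ha)).2.2.2
            have haσ' : a' ∉ σ.1 := fun hc => Finset.disjoint_left.1 hI.2.2.1 (hI.2.1 hc) ha'
            have h1 : a' ∈ (stepState G σ a).2.1 :=
              Finset.mem_union_right _ (Finset.mem_filter.2 ⟨ha', le_of_lt hgt⟩)
            have h2 : a' ∉ (stepState G σ a).1 := by
              intro hc
              rcases Finset.mem_insert.1 hc with h' | h'
              · exact absurd h' (ne_of_lt hgt)
              · exact haσ' h'
            exact hkeep a' h1 h2 (heq ▸ haτ')
        subst haa
        rw [ih (stepState G σ a) (invF_step G hI ha) l₂ τ τ' hrest hrest' heq]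

end Aux

/-- The search tree of `FindConnectedSets` rooted at `i` outputs precisely the
connected vertex sets whose minimum element is `i`, and outputs each exactly
once (the path of the recursion producing a given set is unique). -/
theorem findConnectedSets_correct {n : ℕ} (G : SimpleGraph (Fin n))
    [DecidableRel G.Adj] (i : Fin n) :
    (∀ S : Finset (Fin n),
        (∃ l τ, ReachL G (rootState G i) l τ ∧ τ.1 = S) ↔
        (connSet G S ∧ i ∈ S ∧ ∀ j ∈ S, i ≤ j)) ∧
    (∀ (l l' : List (Fin n)) (τ τ' : FCSState n),
        ReachL G (rootState G i) l τ → ReachL G (rootState G i) l' τ' →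
        τ.1 = τ'.1 → l = l') := by
  constructor
  · intro S
    constructor
    · rintro ⟨l, τ, hr, rfl⟩
      have hI := (reach_props G hr (invF_root G i)).1
      exact ⟨hI.2.2.2.2.2.2.1, hI.1, hI.2.2.2.2.2.2.2⟩
    · rintro ⟨hconn, hiS, hmin⟩
      refine complete G i hconn _ (rootState G i) rfl (invF_root G i) ?_ ?_
      · intro x hx
        simp only [rootState, Finset.mem_singleton] at hx
        exact hx ▸ hiS
      · intro j hjS hj
        simp only [rootState, Finset.mem_filter, Finset.mem_univ, true_and] at hj
        simp only [rootState, Finset.mem_singleton]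
        exact le_antisymm hj (hmin j hjS)
  · intro l l' τ τ' hr hr' heq
    exact unique_list G l (rootState G i) (invF_root G i) l' τ τ' hr hr' heq
end

section
/- Every connected vertex set S of a finite graph on {1,...,n} with min S = i₁ can be built by repeatedly adding, at each step, a vertex of S adjacent to the current partial set, in such a way that the specific exclusion discipline of FindConnectedSets (excluding frontier vertices smaller than the added vertex) never excludes a vertex of S that is still needed; consequently, the algorithm's output contains S. -/
/-- The invariant maintained along the chosen execution path. -/
def FCSInv {n : ℕ} (G : SimpleGraph (Fin n)) [DecidableRel G.Adj]
    (S : Finset (Fin n)) (i : Fin n) (σ : FCSState n) : Prop :=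
  i ∈ σ.1 ∧ σ.1 ⊆ S ∧ σ.1 ⊆ σ.2.1 ∧
  (∀ j ∈ S, j ∈ σ.2.1 → j ∈ σ.1) ∧
  (∀ j, (∃ a ∈ σ.1, G.Adj a j) → j ∉ σ.2.1 → j ∈ σ.2.2) ∧
  (∀ j ∈ σ.2.2, j ∉ σ.2.1)

private lemma crossing {n : ℕ} (G : SimpleGraph (Fin n)) (S T : Finset (Fin n))
    {a b : Fin n}
    (h : Relation.ReflTransGen (fun x y => x ∈ S ∧ y ∈ S ∧ G.Adj x y) a b)
    (ha : a ∈ T) (hb : b ∉ T) :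
    ∃ x ∈ T, ∃ y, y ∈ S ∧ y ∉ T ∧ G.Adj x y := by
  induction h with
  | refl => exact absurd ha hb
  | tail _ hcb ih =>
    rename_i c b' _
    by_cases hc : c ∈ T
    · exact ⟨c, hc, b', hcb.2.1, hb, hcb.2.2⟩
    · exact ih hc

private lemma key {n : ℕ} (G : SimpleGraph (Fin n)) [DecidableRel G.Adj]
    (S : Finset (Fin n)) (hS : connSet G S) (i : Fin n) :
    ∀ k (σ : FCSState n), (S \ σ.1).card = k → FCSInv G S i σ →
      ∃ l τ, ReachL G σ l τ ∧ τ.1 = S := by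
  intro k
  induction k using Nat.strong_induction_on with
  | _ k ih =>
    intro σ hcard hinv
    obtain ⟨hiσ, hsub, hσE, hSE, hN, hFE⟩ := hinv
    by_cases hfull : S ⊆ σ.1
    · exact ⟨[], σ, ReachL.refl σ, le_antisymm (Finset.le_iff_subset.2 hsub) hfull⟩
    · obtain ⟨b, hbS, hbσ⟩ := Finset.not_subset.1 hfull
      obtain ⟨x, hxσ, y, hyS, hyσ, hxy⟩ :=
        crossing G S σ.1 (hS.2 i (hsub hiσ) b hbS) hiσ hbσ
      have hyE : y ∉ σ.2.1 := fun h => hyσ (hSE y hyS h)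
      have hyF : y ∈ σ.2.2 := hN y ⟨x, hxσ, hxy⟩ hyE
      -- choose the minimal frontier vertex that lies in S
      set M : Finset (Fin n) := σ.2.2 ∩ S with hM
      have hMne : M.Nonempty := ⟨y, Finset.mem_inter.2 ⟨hyF, hyS⟩⟩
      set m : Fin n := M.min' hMne with hm
      have hmM : m ∈ M := M.min'_mem hMne
      have hmF : m ∈ σ.2.2 := (Finset.mem_inter.1 hmM).1
      have hmS : m ∈ S := (Finset.mem_inter.1 hmM).2
      have hmnσ : m ∉ σ.1 := fun h => hFE m hmF (hσE h)
      set σ' := stepState G σ m with hσ'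
      have hσ'1 : σ'.1 = insert m σ.1 := rfl
      have hσ'E : σ'.2.1 = σ.2.1 ∪ σ.2.2.filter (fun j => j ≤ m) := rfl
      have hσ'F : σ'.2.2 = σ.2.2.filter (fun j => m < j) ∪
          Finset.univ.filter (fun j =>
            G.Adj m j ∧ j ∉ σ.2.1 ∪ σ.2.2.filter (fun j' => j' ≤ m)) := rfl
      have hinv' : FCSInv G S i σ' := by
        refine ⟨?_, ?_, ?_, ?_, ?_, ?_⟩
        · exact Finset.mem_insert_of_mem hiσ
        · intro j hj
          rcases Finset.mem_insert.1 hj with rfl | hj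
          · exact hmS
          · exact hsub hj
        · intro j hj
          rw [hσ'E]
          rcases Finset.mem_insert.1 hj with rfl | hj
          · exact Finset.mem_union_right _ (Finset.mem_filter.2 ⟨hmF, le_refl _⟩)
          · exact Finset.mem_union_left _ (hσE hj)
        · intro j hjS hjE
          rw [hσ'E] at hjE
          rcases Finset.mem_union.1 hjE with h | h
          · exact Finset.mem_insert_of_mem (hSE j hjS h)
          · obtain ⟨hjF, hjm⟩ := Finset.mem_filter.1 h
            have : m ≤ j := M.min'_le j (Finset.mem_inter.2 ⟨hjF, hjS⟩)
            have : j = m := le_antisymm hjm this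
            exact this ▸ Finset.mem_insert_self m σ.1
        · intro j ⟨a, haσ, haj⟩ hjE
          rw [hσ'E] at hjE
          rw [hσ'F]
          rcases Finset.mem_insert.1 haσ with rfl | haσ
          · exact Finset.mem_union_right _
              (Finset.mem_filter.2 ⟨Finset.mem_univ _, haj, hjE⟩)
          · have hjE0 : j ∉ σ.2.1 := fun h => hjE (Finset.mem_union_left _ h)
            have hjF : j ∈ σ.2.2 := hN j ⟨a, haσ, haj⟩ hjE0
            have hjm : ¬ j ≤ m := fun h =>
              hjE (Finset.mem_union_right _ (Finset.mem_filter.2 ⟨hjF, h⟩))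
            exact Finset.mem_union_left _
              (Finset.mem_filter.2 ⟨hjF, lt_of_not_ge hjm⟩)
        · intro j hj
          rw [hσ'F] at hj
          rw [hσ'E]
          rcases Finset.mem_union.1 hj with h | h
          · obtain ⟨hjF, hjm⟩ := Finset.mem_filter.1 h
            intro hjE
            rcases Finset.mem_union.1 hjE with h' | h'
            · exact hFE j hjF h'
            · exact absurd (Finset.mem_filter.1 h').2 (not_le_of_gt hjm)
          · exact (Finset.mem_filter.1 h).2.2
      have hcard' : (S \ σ'.1).card < k := by
        rw [← hcard, hσ'1]
        apply Finset.card_lt_card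
        constructor
        · intro j hj
          obtain ⟨hjS, hjσ⟩ := Finset.mem_sdiff.1 hj
          exact Finset.mem_sdiff.2 ⟨hjS, fun h => hjσ (Finset.mem_insert_of_mem h)⟩
        · intro hcon
          have : m ∈ S \ σ.1 := Finset.mem_sdiff.2 ⟨hmS, hmnσ⟩
          have := hcon this
          exact (Finset.mem_sdiff.1 this).2 (Finset.mem_insert_self m σ.1)
      obtain ⟨l, τ, hreach, hτ⟩ := ih _ hcard' σ' rfl hinv'
      exact ⟨m :: l, τ, ReachL.cons hmF hreach, hτ⟩

/-- Completeness of `FindConnectedSets`: every connected vertex set `S` with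
minimum element `i` is built by some execution path of the recursion rooted at
`i`; hence the algorithm's output contains `S`. -/
theorem findConnectedSets_complete {n : ℕ} (G : SimpleGraph (Fin n))
    [DecidableRel G.Adj] (S : Finset (Fin n)) (hS : connSet G S)
    (i : Fin n) (hi : i ∈ S) (hmin : ∀ j ∈ S, i ≤ j) :
    ∃ l τ, ReachL G (rootState G i) l τ ∧ τ.1 = S := by
  refine key G S hS i (S \ (rootState G i).1).card (rootState G i) rfl ?_
  refine ⟨Finset.mem_singleton_self i, ?_, ?_, ?_, ?_, ?_⟩
  · intro j hj; rwa [Finset.mem_singleton.1 hj]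
  · intro j hj
    rw [Finset.mem_singleton.1 hj]
    exact Finset.mem_filter.2 ⟨Finset.mem_univ _, le_refl _⟩
  · intro j hjS hjE
    obtain ⟨-, hji⟩ := Finset.mem_filter.1 hjE
    exact Finset.mem_singleton.2 (le_antisymm hji (hmin j hjS))
  · intro j ⟨a, ha, haj⟩ hjE
    rw [Finset.mem_singleton.1 ha] at haj
    have : ¬ j ≤ i := fun h => hjE (Finset.mem_filter.2 ⟨Finset.mem_univ _, h⟩)
    exact Finset.mem_filter.2 ⟨Finset.mem_univ _, haj, lt_of_not_ge this⟩
  · intro j hj hjE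
    exact absurd (Finset.mem_filter.1 hjE).2
      (not_le_of_gt (Finset.mem_filter.1 hj).2.2)
end

section
/- Any finite partial order can be represented by labels of the form (r, s): for every finite strict partial order (P, ≺) there exists an assignment p ↦ (r_p, s_p) with r_p ∈ ℕ and s_p a finite set, such that for all p, q ∈ P: p ≺ q if and only if r_p < r_q and s_p ⊆ s_q. -/
/-- Any finite strict partial order can be represented by labels `(r, s)` with
`r ∈ ℕ` and `s` a finite set, ordered by `(r_p, s_p) < (r_q, s_q) ↔
r_p < r_q ∧ s_p ⊆ s_q`. -/
theorem finite_partial_order_labelable {P : Type*} [Fintype P]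
    (r : P → P → Prop)
    (hirr : ∀ p, ¬ r p p)
    (htrans : ∀ p q s, r p q → r q s → r p s) :
    ∃ (ρ : P → ℕ) (s : P → Finset P),
      ∀ p q : P, r p q ↔ (ρ p < ρ q ∧ s p ⊆ s q) := by
  classical
  set s : P → Finset P := fun p => Finset.univ.filter (fun x => r x p ∨ x = p) with hs
  refine ⟨fun p => (s p).card, s, fun p q => ?_⟩
  have hmem : ∀ x p, x ∈ s p ↔ (r x p ∨ x = p) := by
    intro x p; simp [hs]
  constructor
  · intro hpq
    have hsub : s p ⊆ s q := by
      intro x hx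
      rw [hmem] at hx ⊢
      rcases hx with h | h
      · exact Or.inl (htrans x p q h hpq)
      · exact Or.inl (h ▸ hpq)
    refine ⟨?_, hsub⟩
    apply Finset.card_lt_card
    refine ⟨hsub, fun hqp => ?_⟩
    have : q ∈ s p := hqp ((hmem q q).2 (Or.inr rfl))
    rcases (hmem q p).1 this with h | h
    · exact hirr p (htrans p q p hpq h)
    · exact hirr p (h ▸ hpq)
  · rintro ⟨hcard, hsub⟩
    have : p ∈ s q := hsub ((hmem p p).2 (Or.inr rfl))
    rcases (hmem p q).1 this with h | h
    · exact h
    · exact absurd hcard (by simp [h])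
end

section
/- In the search tree of FindConnectedSets, distinct recursion branches produce distinct vertex sets: if two outputs of the algorithm arise from different paths in the recursion tree, then the output sets are different; in particular, at any recursion node, the subtrees obtained by extending with different frontier vertices i < i' generate disjoint families of sets, since every set in the subtree for i' excludes i while every set in the subtree for i contains i. -/
/-- One recursion step: extend with some frontier vertex. -/
def fcsStep {n : ℕ} (G : SimpleGraph (Fin n)) [DecidableRel G.Adj]
    (σ τ : FCSState n) : Prop :=
  ∃ i ∈ σ.2.2, τ = stepState G σ i

lemma fcs_inv_step {n : ℕ} (G : SimpleGraph (Fin n)) [DecidableRel G.Adj]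
    (σ : FCSState n) (hS : σ.1 ⊆ σ.2.1) (hD : Disjoint σ.2.2 σ.2.1)
    (i : Fin n) (hi : i ∈ σ.2.2) :
    (stepState G σ i).1 ⊆ (stepState G σ i).2.1 ∧
    Disjoint (stepState G σ i).2.2 (stepState G σ i).2.1 ∧
    σ.1 ⊆ (stepState G σ i).1 ∧
    σ.2.1 \ σ.1 ⊆ (stepState G σ i).2.1 \ (stepState G σ i).1 := by
  rw [Finset.disjoint_left] at hD
  refine ⟨?_, ?_, ?_, ?_⟩
  · intro j hj
    simp only [stepState, Finset.mem_insert, Finset.mem_union, Finset.mem_filter] at hj ⊢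
    rcases hj with rfl | hj
    · exact Or.inr ⟨hi, le_refl j⟩
    · exact Or.inl (hS hj)
  · rw [Finset.disjoint_left]
    intro j hj
    simp only [stepState, Finset.mem_union, Finset.mem_filter, Finset.mem_univ,
      true_and, not_or, not_and, not_le] at hj ⊢
    tauto
  · intro j hj; simp only [stepState, Finset.mem_insert]; exact Or.inr hj
  · intro j hj
    simp only [Finset.mem_sdiff] at hj
    simp only [stepState, Finset.mem_sdiff, Finset.mem_union, Finset.mem_insert, not_or] at *
    exact ⟨Or.inl hj.1, fun h => hD hi (h ▸ hj.1), hj.2⟩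

lemma fcs_inv_reach {n : ℕ} (G : SimpleGraph (Fin n)) [DecidableRel G.Adj]
    (σ τ : FCSState n) (hS : σ.1 ⊆ σ.2.1) (hD : Disjoint σ.2.2 σ.2.1)
    (h : Relation.ReflTransGen (fcsStep G) σ τ) :
    σ.1 ⊆ τ.1 ∧ Disjoint (σ.2.1 \ σ.1) τ.1 := by
  revert hS hD
  induction h using Relation.ReflTransGen.head_induction_on with
  | refl => exact fun hS hD => ⟨subset_refl _, disjoint_sdiff_self_left⟩
  | head hstep _ ih =>
    intro hS hD
    obtain ⟨i, hi, rfl⟩ := hstep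
    obtain ⟨h1, h2, h3, h4⟩ := fcs_inv_step G _ hS hD i hi
    obtain ⟨ih1, ih2⟩ := ih h1 h2
    exact ⟨h3.trans ih1, (Finset.disjoint_left.2 fun j hj =>
      Finset.disjoint_left.1 ih2 (h4 hj))⟩

/-- Distinct recursion branches of `FindConnectedSets` produce distinct sets.
Invariant: every set output in a subtree contains the subtree's current set
and avoids its excluded set (apart from the current set itself). Consequently,
extending a state with frontier vertices `i < i'` yields disjoint families:
sets in the subtree for `i` contain `i`, sets in the subtree for `i'` exclude `i`. -/
theorem findConnectedSets_branches_distinct {n : ℕ} (G : SimpleGraph (Fin n))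
    [DecidableRel G.Adj] :
    (∀ σ τ : FCSState n, σ.1 ⊆ σ.2.1 → Disjoint σ.2.2 σ.2.1 →
        Relation.ReflTransGen (fcsStep G) σ τ →
        σ.1 ⊆ τ.1 ∧ Disjoint (σ.2.1 \ σ.1) τ.1) ∧
    (∀ σ : FCSState n, σ.1 ⊆ σ.2.1 → Disjoint σ.2.2 σ.2.1 →
        ∀ i i' : Fin n, i ∈ σ.2.2 → i' ∈ σ.2.2 → i < i' →
        ∀ τ τ' : FCSState n,
          Relation.ReflTransGen (fcsStep G) (stepState G σ i) τ →
          Relation.ReflTransGen (fcsStep G) (stepState G σ i') τ' →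
          i ∈ τ.1 ∧ i ∉ τ'.1 ∧ τ.1 ≠ τ'.1) := by
  refine ⟨fcs_inv_reach G, ?_⟩
  intro σ hS hD i i' hi hi' hlt τ τ' hτ hτ'
  obtain ⟨h1, h2, -, -⟩ := fcs_inv_step G σ hS hD i hi
  obtain ⟨h1', h2', -, -⟩ := fcs_inv_step G σ hS hD i' hi'
  obtain ⟨hsub, -⟩ := fcs_inv_reach G _ _ h1 h2 hτ
  obtain ⟨-, hdis'⟩ := fcs_inv_reach G _ _ h1' h2' hτ'
  have hiτ : i ∈ τ.1 := hsub (by simp [stepState])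
  have hiV : i ∈ (stepState G σ i').2.1 \ (stepState G σ i').1 := by
    simp only [stepState, Finset.mem_sdiff, Finset.mem_union, Finset.mem_filter,
      Finset.mem_insert, not_or]
    exact ⟨Or.inr ⟨hi, hlt.le⟩, hlt.ne, fun h => Finset.disjoint_left.1 hD hi (hS h)⟩
  have hiτ' : i ∉ τ'.1 := Finset.disjoint_left.1 hdis' hiV
  exact ⟨hiτ, hiτ', fun h => hiτ' (h ▸ hiτ)⟩
end
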